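/- arXiv:1608.04553 — 2 statements merged into one kernel-verified Lean document; each statement's English description precedes it below -/
import Mathlib

section
/- Let D : ℝ × ℝ² → ℝ be twice continuously differentiable with ∇D ≠ 0 on a neighborhood of the segment {(t₁, (1−s)r₀ + s r₁) : s ∈ [0,1]} for a fixed time t₁ and points r₀, r₁ ∈ ℝ². Suppose φ : [0,1] → ℝ is a differentiable angle lift of the gradient along the segment ξ(s) := (1−s)r₀ + s r₁, i.e., ∇D(t₁, ξ(s)) = ‖∇D(t₁, ξ(s))‖·(cos φ(s), sin φ(s)) for all s. Then φ′(s) = κ(t₁,ξ(s))·⟨r₁ − r₀, T(t₁,ξ(s))⟩ − τ_ρ(t₁,ξ(s))·⟨r₁ − r₀, N(t₁,ξ(s))⟩ for every s, hence |φ′(s)| ≤ ‖r₁ − r₀‖·√(κ(t₁,ξ(s))² + τ_ρ(t₁,ξ(s))²) and |φ(1) − φ(0)| ≤ ‖r₁ − r₀‖·sup_{s ∈ [0,1]} √(κ(t₁,ξ(s))² + τ_ρ(t₁,ξ(s))²). -/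
open Real Set
open scoped RealInnerProductSpace
noncomputable section

/-- The plane ℝ². -/
abbrev Plane := EuclideanSpace ℝ (Fin 2)

/-- Spatial gradient ∇D of the field. -/
def sgrad (D : ℝ × Plane → ℝ) (t : ℝ) (r : Plane) : Plane :=
  gradient (fun p => D (t, p)) r

/-- Partial time derivative D′_t of the field. -/
def dT (D : ℝ × Plane → ℝ) (t : ℝ) (r : Plane) : ℝ :=
  deriv (fun s => D (s, r)) t

/-- Second partial time derivative D″_tt of the field. -/
def dTT (D : ℝ × Plane → ℝ) (t : ℝ) (r : Plane) : ℝ :=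
  deriv (fun s => dT D s r) t

/-- Spatial gradient ∇D′_t of the partial time derivative. -/
def sgradDt (D : ℝ × Plane → ℝ) (t : ℝ) (r : Plane) : Plane :=
  gradient (fun p => dT D t p) r

/-- Spatial Hessian D″ applied to a vector v. -/
def hess (D : ℝ × Plane → ℝ) (t : ℝ) (r : Plane) (v : Plane) : Plane :=
  fderiv ℝ (fun p => sgrad D t p) r v

/-- Clockwise rotation through π/2, i.e. R_{−π/2}. -/
def rotCW (v : Plane) : Plane := !₂[v 1, -(v 0)]

/-- The unit normal N = ∇D/‖∇D‖ of the isoline. -/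
def unitN (D : ℝ × Plane → ℝ) (t : ℝ) (r : Plane) : Plane :=
  ‖sgrad D t r‖⁻¹ • sgrad D t r

/-- The unit tangent T = R_{−π/2} N of the isoline. -/
def unitT (D : ℝ × Plane → ℝ) (t : ℝ) (r : Plane) : Plane :=
  rotCW (unitN D t r)

/-- The density of isolines ρ = ‖∇D‖. -/
def rho (D : ℝ × Plane → ℝ) (t : ℝ) (r : Plane) : ℝ := ‖sgrad D t r‖

/-- The front velocity λ = −D′_t/‖∇D‖ of the isoline. -/
def lam (D : ℝ × Plane → ℝ) (t : ℝ) (r : Plane) : ℝ :=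
  -(dT D t r) / ‖sgrad D t r‖

/-- The proportional growth rate v_ρ = ⟨∇D′_t + λD″N, N⟩/‖∇D‖ of the density ρ
    along the moving isoline. -/
def vRho (D : ℝ × Plane → ℝ) (t : ℝ) (r : Plane) : ℝ :=
  ⟪sgradDt D t r + lam D t r • hess D t r (unitN D t r), unitN D t r⟫ / ‖sgrad D t r‖

/-- The angular velocity ω = −⟨∇D′_t + λD″N, T⟩/‖∇D‖ of rotation of the isoline. -/
def omg (D : ℝ × Plane → ℝ) (t : ℝ) (r : Plane) : ℝ :=
  -⟪sgradDt D t r + lam D t r • hess D t r (unitN D t r), unitT D t r⟫ / ‖sgrad D t r‖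

/-- The front acceleration α of the isoline. -/
def alph (D : ℝ × Plane → ℝ) (t : ℝ) (r : Plane) : ℝ :=
  -(dTT D t r + lam D t r * ⟪sgradDt D t r, unitN D t r⟫) / ‖sgrad D t r‖
    - lam D t r * vRho D t r

/-- The signed curvature κ = −⟨D″T, T⟩/‖∇D‖ of the isoline. -/
def kap (D : ℝ × Plane → ℝ) (t : ℝ) (r : Plane) : ℝ :=
  -⟪hess D t r (unitT D t r), unitT D t r⟫ / ‖sgrad D t r‖

/-- The proportional growth rate τ_ρ = ⟨D″N, T⟩/‖∇D‖ of the density ρ under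
    tangential displacement. -/
def tauRho (D : ℝ × Plane → ℝ) (t : ℝ) (r : Plane) : ℝ :=
  ⟪hess D t r (unitN D t r), unitT D t r⟫ / ‖sgrad D t r‖

/-- The proportional growth rate n_ρ = ⟨D″N, N⟩/‖∇D‖ of the density ρ under
    normal displacement. -/
def nRho (D : ℝ × Plane → ℝ) (t : ℝ) (r : Plane) : ℝ :=
  ⟪hess D t r (unitN D t r), unitN D t r⟫ / ‖sgrad D t r‖

/-- The angular velocity ω_∇ = −⟨∇D′_t, T⟩/‖∇D‖ of rotation of the gradient. -/
def omgGrad (D : ℝ × Plane → ℝ) (t : ℝ) (r : Plane) : ℝ :=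
  -⟪sgradDt D t r, unitT D t r⟫ / ‖sgrad D t r‖

/-- The unit velocity-orientation vector e(θ) = (cos θ, sin θ). -/
def eVec (θ : ℝ) : Plane := !₂[Real.cos θ, Real.sin θ]


section AuxLemmas

lemma aux_inner_eVec_rotCW (θ θ₀ : ℝ) : ⟪eVec θ, rotCW (eVec θ₀)⟫ = Real.sin (θ₀ - θ) := by
  simp [eVec, rotCW, PiLp.inner_apply, Fin.sum_univ_two, Real.sin_sub]
  ring

lemma aux_decompose (w : Plane) (θ : ℝ) :
    ⟪w, rotCW (eVec θ)⟫ • rotCW (eVec θ) + ⟪w, eVec θ⟫ • eVec θ = w := by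
  ext i
  fin_cases i <;>
    simp [eVec, rotCW, PiLp.inner_apply, Fin.sum_univ_two, PiLp.add_apply, PiLp.smul_apply]
  · linear_combination w 0 * Real.sin_sq_add_cos_sq θ
  · linear_combination w 1 * Real.sin_sq_add_cos_sq θ

lemma aux_norm_eVec (θ : ℝ) : ‖eVec θ‖ = 1 := by
  rw [EuclideanSpace.norm_eq]
  simp [eVec, PiLp.inner_apply, Fin.sum_univ_two]

lemma aux_norm_rotCW (v : Plane) : ‖rotCW v‖ = ‖v‖ := by
  rw [EuclideanSpace.norm_eq, EuclideanSpace.norm_eq]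
  simp [rotCW, PiLp.inner_apply, Fin.sum_univ_two]
  ring_nf

lemma aux_sq_add_sq (w : Plane) (θ : ℝ) :
    ⟪w, rotCW (eVec θ)⟫ ^ 2 + ⟪w, eVec θ⟫ ^ 2 = ‖w‖ ^ 2 := by
  rw [EuclideanSpace.norm_eq, Real.sq_sqrt (by positivity)]
  simp [eVec, rotCW, PiLp.inner_apply, Fin.sum_univ_two]
  linear_combination (w 0 ^ 2 + w 1 ^ 2) * Real.sin_sq_add_cos_sq θ

lemma aux_sgrad_contDiffAt (D : ℝ × Plane → ℝ) (t : ℝ) (r : Plane)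
    (h : ContDiffAt ℝ 2 D (t, r)) : ContDiffAt ℝ 1 (sgrad D t) r := by
  have hf : ContDiffAt ℝ 2 (fun p : Plane => D (t, p)) r :=
    h.comp r ((contDiffAt_const.prodMk contDiffAt_id))
  have h1 : ContDiffAt ℝ 1 (fderiv ℝ (fun p : Plane => D (t, p))) r :=
    hf.fderiv_right (by norm_num)
  exact (InnerProductSpace.toDual ℝ Plane).symm.contDiff.contDiffAt.comp r h1

lemma aux_hess_continuousAt (D : ℝ × Plane → ℝ) (t : ℝ) (r : Plane)
    (h : ContDiffAt ℝ 2 D (t, r)) :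
    ContinuousAt (fun p => fderiv ℝ (fun q => sgrad D t q) p) r := by
  obtain ⟨u, hu, hcd⟩ := (aux_sgrad_contDiffAt D t r h).contDiffOn le_rfl (by simp)
  obtain ⟨v, hvu, hv, hrv⟩ := mem_nhds_iff.1 hu
  have := (hcd.mono hvu).continuousOn_fderiv_of_isOpen hv le_rfl
  exact this.continuousAt (hv.mem_nhds hrv)

lemma aux_hasDerivAt_sgrad (D : ℝ × Plane → ℝ) (t : ℝ) (r₀ r₁ : Plane) (s : ℝ)
    (h : ContDiffAt ℝ 2 D (t, r₀ + s • (r₁ - r₀))) :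
    HasDerivAt (fun s : ℝ => sgrad D t (r₀ + s • (r₁ - r₀)))
      (hess D t (r₀ + s • (r₁ - r₀)) (r₁ - r₀)) s := by
  have hξ : HasDerivAt (fun s : ℝ => r₀ + s • (r₁ - r₀)) (r₁ - r₀) s := by
    simpa using ((hasDerivAt_id s).smul_const (r₁ - r₀)).const_add r₀
  have hg : HasFDerivAt (sgrad D t) (fderiv ℝ (sgrad D t) (r₀ + s • (r₁ - r₀)))
      (r₀ + s • (r₁ - r₀)) :=
    ((aux_sgrad_contDiffAt D t _ h).differentiableAt one_ne_zero).hasFDerivAt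
  exact hg.comp_hasDerivAt s hξ

end AuxLemmas

/-- a differentiable angle lift `φ` of the gradient along the segment
`ξ(s) = (1−s)r₀ + s·r₁` at a fixed time `t₁` satisfies
`φ′(s) = κ·⟨r₁ − r₀, T⟩ − τ_ρ·⟨r₁ − r₀, N⟩`, hence
`|φ′(s)| ≤ ‖r₁ − r₀‖·√(κ² + τ_ρ²)` and
`|φ(1) − φ(0)| ≤ ‖r₁ − r₀‖·sup_{s∈[0,1]} √(κ² + τ_ρ²)`. -/
theorem gradient_angle_lift_along_segment
    (D : ℝ × Plane → ℝ) (t₁ : ℝ) (r₀ r₁ : Plane)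
    (hD : ∀ s ∈ Icc (0:ℝ) 1, ContDiffAt ℝ 2 D (t₁, r₀ + s • (r₁ - r₀)))
    (hgrad : ∀ s ∈ Icc (0:ℝ) 1, sgrad D t₁ (r₀ + s • (r₁ - r₀)) ≠ 0)
    (φ φ' : ℝ → ℝ)
    (hφ : ∀ s ∈ Icc (0:ℝ) 1, HasDerivAt φ (φ' s) s)
    (hlift : ∀ s ∈ Icc (0:ℝ) 1,
      sgrad D t₁ (r₀ + s • (r₁ - r₀))
        = ‖sgrad D t₁ (r₀ + s • (r₁ - r₀))‖ • eVec (φ s)) :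
    (∀ s ∈ Icc (0:ℝ) 1,
      φ' s = kap D t₁ (r₀ + s • (r₁ - r₀)) * ⟪r₁ - r₀, unitT D t₁ (r₀ + s • (r₁ - r₀))⟫
        - tauRho D t₁ (r₀ + s • (r₁ - r₀)) * ⟪r₁ - r₀, unitN D t₁ (r₀ + s • (r₁ - r₀))⟫) ∧
    (∀ s ∈ Icc (0:ℝ) 1,
      |φ' s| ≤ ‖r₁ - r₀‖ * Real.sqrt ((kap D t₁ (r₀ + s • (r₁ - r₀))) ^ 2
        + (tauRho D t₁ (r₀ + s • (r₁ - r₀))) ^ 2)) ∧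
    |φ 1 - φ 0| ≤ ‖r₁ - r₀‖ * ⨆ s : Icc (0:ℝ) 1,
      Real.sqrt ((kap D t₁ (r₀ + (s:ℝ) • (r₁ - r₀))) ^ 2
        + (tauRho D t₁ (r₀ + (s:ℝ) • (r₁ - r₀))) ^ 2) := by
  -- unit normal and tangent from the lift
  have hρ0 : ∀ s ∈ Icc (0:ℝ) 1, ‖sgrad D t₁ (r₀ + s • (r₁ - r₀))‖ ≠ 0 :=
    fun s hs => norm_ne_zero_iff.2 (hgrad s hs)
  have hN : ∀ s ∈ Icc (0:ℝ) 1, unitN D t₁ (r₀ + s • (r₁ - r₀)) = eVec (φ s) := by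
    intro s hs
    rw [unitN, hlift s hs, norm_smul, aux_norm_eVec, mul_one, norm_norm, smul_smul,
      inv_mul_cancel₀ (hρ0 s hs), one_smul]
  have hT : ∀ s ∈ Icc (0:ℝ) 1, unitT D t₁ (r₀ + s • (r₁ - r₀)) = rotCW (eVec (φ s)) := by
    intro s hs; rw [unitT, hN s hs]
  -- Part 1: the derivative identity
  have key : ∀ s ∈ Icc (0:ℝ) 1,
      φ' s = kap D t₁ (r₀ + s • (r₁ - r₀)) * ⟪r₁ - r₀, unitT D t₁ (r₀ + s • (r₁ - r₀))⟫
        - tauRho D t₁ (r₀ + s • (r₁ - r₀)) * ⟪r₁ - r₀, unitN D t₁ (r₀ + s • (r₁ - r₀))⟫ := by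
    intro s₀ hs₀
    have hξder := aux_hasDerivAt_sgrad D t₁ r₀ r₁ s₀ (hD s₀ hs₀)
    have hu : HasDerivAt
        (fun s => ⟪sgrad D t₁ (r₀ + s • (r₁ - r₀)), rotCW (eVec (φ s₀))⟫)
        ⟪hess D t₁ (r₀ + s₀ • (r₁ - r₀)) (r₁ - r₀), rotCW (eVec (φ s₀))⟫ s₀ := by
      simpa using hξder.inner ℝ (hasDerivAt_const s₀ (rotCW (eVec (φ s₀))))
    have hρd : DifferentiableAt ℝ (fun s => ‖sgrad D t₁ (r₀ + s • (r₁ - r₀))‖) s₀ :=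
      DifferentiableAt.norm ℝ hξder.differentiableAt (hgrad s₀ hs₀)
    have hsin : HasDerivAt (fun s => Real.sin (φ s₀ - φ s))
        (Real.cos (φ s₀ - φ s₀) * (0 - φ' s₀)) s₀ :=
      (Real.hasDerivAt_sin (φ s₀ - φ s₀)).comp (h := fun s => φ s₀ - φ s) s₀
        ((hasDerivAt_const s₀ (φ s₀)).sub (hφ s₀ hs₀))
    have hu2 := hρd.hasDerivAt.mul hsin
    simp only [sub_self, Real.sin_zero, Real.cos_zero, mul_zero, zero_add, one_mul,
      zero_sub, mul_neg] at hu2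
    have heq : ∀ y ∈ Icc (0:ℝ) 1,
        (fun s => ⟪sgrad D t₁ (r₀ + s • (r₁ - r₀)), rotCW (eVec (φ s₀))⟫) y
          = (fun s => ‖sgrad D t₁ (r₀ + s • (r₁ - r₀))‖ * Real.sin (φ s₀ - φ s)) y := by
      intro y hy
      simp only
      rw [hlift y hy, real_inner_smul_left, aux_inner_eVec_rotCW, norm_smul,
        aux_norm_eVec, mul_one, norm_norm]
    have hud := UniqueDiffWithinAt.eq_deriv (Icc (0:ℝ) 1)
      ((uniqueDiffOn_Icc one_pos) s₀ hs₀) hu.hasDerivWithinAt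
      (hu2.hasDerivWithinAt.congr heq (heq s₀ hs₀))
    have hsplit : (⟪hess D t₁ (r₀ + s₀ • (r₁ - r₀)) (r₁ - r₀), rotCW (eVec (φ s₀))⟫ : ℝ)
        = ⟪r₁ - r₀, rotCW (eVec (φ s₀))⟫
            * ⟪hess D t₁ (r₀ + s₀ • (r₁ - r₀)) (rotCW (eVec (φ s₀))), rotCW (eVec (φ s₀))⟫
          + ⟪r₁ - r₀, eVec (φ s₀)⟫
            * ⟪hess D t₁ (r₀ + s₀ • (r₁ - r₀)) (eVec (φ s₀)), rotCW (eVec (φ s₀))⟫ := by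
      have hw : r₁ - r₀ = ⟪r₁ - r₀, rotCW (eVec (φ s₀))⟫ • rotCW (eVec (φ s₀))
          + ⟪r₁ - r₀, eVec (φ s₀)⟫ • eVec (φ s₀) := (aux_decompose (r₁ - r₀) (φ s₀)).symm
      rw [show hess D t₁ (r₀ + s₀ • (r₁ - r₀)) (r₁ - r₀)
          = hess D t₁ (r₀ + s₀ • (r₁ - r₀)) (⟪r₁ - r₀, rotCW (eVec (φ s₀))⟫ • rotCW (eVec (φ s₀))
            + ⟪r₁ - r₀, eVec (φ s₀)⟫ • eVec (φ s₀))
          from congrArg (hess D t₁ (r₀ + s₀ • (r₁ - r₀))) hw]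
      simp only [hess, map_add, map_smul, inner_add_left, real_inner_smul_left]
    have hmain : ‖sgrad D t₁ (r₀ + s₀ • (r₁ - r₀))‖ * φ' s₀
        = -(⟪r₁ - r₀, rotCW (eVec (φ s₀))⟫
            * ⟪hess D t₁ (r₀ + s₀ • (r₁ - r₀)) (rotCW (eVec (φ s₀))), rotCW (eVec (φ s₀))⟫
          + ⟪r₁ - r₀, eVec (φ s₀)⟫
            * ⟪hess D t₁ (r₀ + s₀ • (r₁ - r₀)) (eVec (φ s₀)), rotCW (eVec (φ s₀))⟫) := by
      rw [← hsplit, hud]; ring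
    rw [hT s₀ hs₀]
    simp only [kap, tauRho, hT s₀ hs₀, hN s₀ hs₀]
    have hne := hρ0 s₀ hs₀
    calc φ' s₀ = ‖sgrad D t₁ (r₀ + s₀ • (r₁ - r₀))‖⁻¹
          * (‖sgrad D t₁ (r₀ + s₀ • (r₁ - r₀))‖ * φ' s₀) := by
            rw [← mul_assoc, inv_mul_cancel₀ hne, one_mul]
      _ = ‖sgrad D t₁ (r₀ + s₀ • (r₁ - r₀))‖⁻¹
          * (-(⟪r₁ - r₀, rotCW (eVec (φ s₀))⟫
            * ⟪hess D t₁ (r₀ + s₀ • (r₁ - r₀)) (rotCW (eVec (φ s₀))), rotCW (eVec (φ s₀))⟫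
          + ⟪r₁ - r₀, eVec (φ s₀)⟫
            * ⟪hess D t₁ (r₀ + s₀ • (r₁ - r₀)) (eVec (φ s₀)), rotCW (eVec (φ s₀))⟫)) := by
            rw [hmain]
      _ = _ := by ring
  have part2 : ∀ s ∈ Icc (0:ℝ) 1,
      |φ' s| ≤ ‖r₁ - r₀‖ * Real.sqrt ((kap D t₁ (r₀ + s • (r₁ - r₀))) ^ 2
        + (tauRho D t₁ (r₀ + s • (r₁ - r₀))) ^ 2) := by
    intro s₀ hs₀
    have hab : ⟪r₁ - r₀, unitT D t₁ (r₀ + s₀ • (r₁ - r₀))⟫ ^ 2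
        + ⟪r₁ - r₀, unitN D t₁ (r₀ + s₀ • (r₁ - r₀))⟫ ^ 2 = ‖r₁ - r₀‖ ^ 2 := by
      rw [hT s₀ hs₀, hN s₀ hs₀]; exact aux_sq_add_sq (r₁ - r₀) (φ s₀)
    rw [key s₀ hs₀]
    set κ := kap D t₁ (r₀ + s₀ • (r₁ - r₀))
    set τ := tauRho D t₁ (r₀ + s₀ • (r₁ - r₀))
    set a := (⟪r₁ - r₀, unitT D t₁ (r₀ + s₀ • (r₁ - r₀))⟫ : ℝ)
    set b := (⟪r₁ - r₀, unitN D t₁ (r₀ + s₀ • (r₁ - r₀))⟫ : ℝ)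
    have h2 : (κ * a - τ * b) ^ 2 ≤ (κ ^ 2 + τ ^ 2) * ‖r₁ - r₀‖ ^ 2 := by
      nlinarith [sq_nonneg (κ * b + τ * a), hab]
    calc |κ * a - τ * b| = Real.sqrt ((κ * a - τ * b) ^ 2) := (Real.sqrt_sq_eq_abs _).symm
      _ ≤ Real.sqrt ((κ ^ 2 + τ ^ 2) * ‖r₁ - r₀‖ ^ 2) := Real.sqrt_le_sqrt h2
      _ = ‖r₁ - r₀‖ * Real.sqrt (κ ^ 2 + τ ^ 2) := by
          rw [Real.sqrt_mul (by positivity), Real.sqrt_sq (norm_nonneg _), mul_comm]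
  refine ⟨key, part2, ?_⟩
  -- Part 3
  have hξcont : Continuous (fun s : ℝ => r₀ + s • (r₁ - r₀)) :=
    continuous_const.add (continuous_id.smul continuous_const)
  have hHcont : ContinuousOn
      (fun s : ℝ => ‖fderiv ℝ (fun p => sgrad D t₁ p) (r₀ + s • (r₁ - r₀))‖) (Icc 0 1) := by
    intro s hs
    have h2 : ContinuousAt (fun s : ℝ => fderiv ℝ (fun q => sgrad D t₁ q) (r₀ + s • (r₁ - r₀))) s :=
      ContinuousAt.comp (aux_hess_continuousAt D t₁ _ (hD s hs)) hξcont.continuousAt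
    exact h2.norm.continuousWithinAt
  obtain ⟨M, hM⟩ := isCompact_Icc.exists_bound_of_continuousOn hHcont
  have hρcont : ContinuousOn (fun s : ℝ => ‖sgrad D t₁ (r₀ + s • (r₁ - r₀))‖) (Icc 0 1) := by
    intro s hs
    exact (((aux_hasDerivAt_sgrad D t₁ r₀ r₁ s (hD s hs)).continuousAt).norm).continuousWithinAt
  obtain ⟨sm, hsm, hmin⟩ := isCompact_Icc.exists_isMinOn (nonempty_Icc.2 zero_le_one) hρcont
  have hmpos : 0 < ‖sgrad D t₁ (r₀ + sm • (r₁ - r₀))‖ :=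
    lt_of_le_of_ne (norm_nonneg _) (Ne.symm (hρ0 sm hsm))
  have hMnn : 0 ≤ M := le_trans (norm_nonneg _) (hM sm hsm)
  have hbnd : ∀ s ∈ Icc (0:ℝ) 1,
      Real.sqrt ((kap D t₁ (r₀ + s • (r₁ - r₀))) ^ 2 + (tauRho D t₁ (r₀ + s • (r₁ - r₀))) ^ 2)
        ≤ Real.sqrt (2 * (M / ‖sgrad D t₁ (r₀ + sm • (r₁ - r₀))‖) ^ 2) := by
    intro s hs
    have hsT : ‖unitT D t₁ (r₀ + s • (r₁ - r₀))‖ = 1 := by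
      rw [hT s hs, aux_norm_rotCW, aux_norm_eVec]
    have hsN : ‖unitN D t₁ (r₀ + s • (r₁ - r₀))‖ = 1 := by
      rw [hN s hs, aux_norm_eVec]
    have hHb : ∀ u w : Plane, ‖u‖ = 1 → ‖w‖ = 1 →
        |⟪hess D t₁ (r₀ + s • (r₁ - r₀)) u, w⟫| ≤ M := by
      intro u w hu hw
      calc |⟪hess D t₁ (r₀ + s • (r₁ - r₀)) u, w⟫|
          ≤ ‖hess D t₁ (r₀ + s • (r₁ - r₀)) u‖ * ‖w‖ := abs_real_inner_le_norm _ _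
        _ ≤ (‖fderiv ℝ (fun p => sgrad D t₁ p) (r₀ + s • (r₁ - r₀))‖ * ‖u‖) * ‖w‖ :=
            mul_le_mul_of_nonneg_right (ContinuousLinearMap.le_opNorm _ u) (norm_nonneg w)
        _ = ‖fderiv ℝ (fun p => sgrad D t₁ p) (r₀ + s • (r₁ - r₀))‖ := by rw [hu, hw]; ring
        _ ≤ M := by
            have h := hM s hs
            rwa [Real.norm_eq_abs, abs_of_nonneg (norm_nonneg _)] at h
    have hρs : ‖sgrad D t₁ (r₀ + sm • (r₁ - r₀))‖ ≤ ‖sgrad D t₁ (r₀ + s • (r₁ - r₀))‖ :=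
      isMinOn_iff.1 hmin s hs
    have hkap : |kap D t₁ (r₀ + s • (r₁ - r₀))| ≤ M / ‖sgrad D t₁ (r₀ + sm • (r₁ - r₀))‖ := by
      simp only [kap]
      rw [abs_div, abs_neg, abs_of_nonneg (norm_nonneg _)]
      exact div_le_div₀ hMnn (hHb _ _ hsT hsT) hmpos hρs
    have htau : |tauRho D t₁ (r₀ + s • (r₁ - r₀))| ≤ M / ‖sgrad D t₁ (r₀ + sm • (r₁ - r₀))‖ := by
      simp only [tauRho]
      rw [abs_div, abs_of_nonneg (norm_nonneg _)]
      exact div_le_div₀ hMnn (hHb _ _ hsN hsT) hmpos hρs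
    apply Real.sqrt_le_sqrt
    have hk2 : (kap D t₁ (r₀ + s • (r₁ - r₀))) ^ 2
        ≤ (M / ‖sgrad D t₁ (r₀ + sm • (r₁ - r₀))‖) ^ 2 := by
      rw [← sq_abs]; exact pow_le_pow_left₀ (abs_nonneg _) hkap 2
    have ht2 : (tauRho D t₁ (r₀ + s • (r₁ - r₀))) ^ 2
        ≤ (M / ‖sgrad D t₁ (r₀ + sm • (r₁ - r₀))‖) ^ 2 := by
      rw [← sq_abs]; exact pow_le_pow_left₀ (abs_nonneg _) htau 2
    linarith
  have hbdd : BddAbove (Set.range (fun s : Icc (0:ℝ) 1 =>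
      Real.sqrt ((kap D t₁ (r₀ + (s:ℝ) • (r₁ - r₀))) ^ 2
        + (tauRho D t₁ (r₀ + (s:ℝ) • (r₁ - r₀))) ^ 2))) := by
    refine ⟨Real.sqrt (2 * (M / ‖sgrad D t₁ (r₀ + sm • (r₁ - r₀))‖) ^ 2), ?_⟩
    rintro x ⟨s, rfl⟩
    exact hbnd s s.2
  have hsupb : ∀ s ∈ Icc (0:ℝ) 1,
      Real.sqrt ((kap D t₁ (r₀ + s • (r₁ - r₀))) ^ 2 + (tauRho D t₁ (r₀ + s • (r₁ - r₀))) ^ 2)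
        ≤ ⨆ s : Icc (0:ℝ) 1, Real.sqrt ((kap D t₁ (r₀ + (s:ℝ) • (r₁ - r₀))) ^ 2
          + (tauRho D t₁ (r₀ + (s:ℝ) • (r₁ - r₀))) ^ 2) :=
    fun s hs => le_ciSup hbdd (⟨s, hs⟩ : Icc (0:ℝ) 1)
  have bound : ∀ s ∈ Ico (0:ℝ) 1, ‖φ' s‖ ≤ ‖r₁ - r₀‖ * ⨆ s : Icc (0:ℝ) 1,
      Real.sqrt ((kap D t₁ (r₀ + (s:ℝ) • (r₁ - r₀))) ^ 2
        + (tauRho D t₁ (r₀ + (s:ℝ) • (r₁ - r₀))) ^ 2) := by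
    intro s hs
    have hs' : s ∈ Icc (0:ℝ) 1 := Ico_subset_Icc_self hs
    rw [Real.norm_eq_abs]
    exact le_trans (part2 s hs') (mul_le_mul_of_nonneg_left (hsupb s hs') (norm_nonneg _))
  have hfin := norm_image_sub_le_of_norm_deriv_le_segment_01'
    (fun s hs => (hφ s hs).hasDerivWithinAt) bound
  rwa [Real.norm_eq_abs] at hfin
end
end

section
/- Let a robot move in the plane at constant speed v̄ > 0 according to ṙ(t) = v̄·e(θ(t)) with e(θ) := (cos θ, sin θ) and θ differentiable, in a domain where D : ℝ × ℝ² → ℝ is three times differentiable (in particular twice continuously differentiable) and ∇D(t, r(t)) ≠ 0. Evaluate at (t, r(t)): ρ := ‖∇D‖, N := ∇D/ρ, T := R_{−π/2}N, λ := −D′_t/ρ, v_ρ := ⟨∇D′_t + λD″N, N⟩/ρ, ω := −⟨∇D′_t + λD″N, T⟩/ρ, α := −(D″_tt + λ⟨∇D′_t, N⟩)/ρ − λ·v_ρ, κ := −⟨D″T, T⟩/ρ, τ_ρ := ⟨D″N, T⟩/ρ, n_ρ := ⟨D″N, N⟩/ρ, and set v_Δ := v̄·⟨N, e(θ(t))⟩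 − λ and v_T := v̄·⟨e(θ(t)), T⟩. Then the field reading d(t) := D(t, r(t)) is twice differentiable and d̈(t) = ρ·[(θ̇(t) − 2ω − κ·v_T + 2·v_Δ·τ_ρ)·v_T + 2·v_ρ·v_Δ − α + v_Δ²·n_ρ]. -/
open Real Set
open scoped RealInnerProductSpace
noncomputable section

/-! ### Auxiliary lemmas -/

section AuxLemmas

open Filter
open scoped Topology

lemma aux_rotCW_smul (c : ℝ) (v : Plane) : rotCW (c • v) = c • rotCW v := by
  ext i; fin_cases i <;> simp [rotCW]

lemma aux_inner_rotCW (a b : Plane) : ⟪rotCW a, b⟫ = -⟪a, rotCW b⟫ := by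
  simp only [rotCW, PiLp.inner_apply, Fin.sum_univ_two, RCLike.inner_apply, conj_trivial,
    Matrix.cons_val_zero, Matrix.cons_val_one, Matrix.head_cons]
  ring

lemma aux_norm_sq (g : Plane) : g 0 ^ 2 + g 1 ^ 2 = ‖g‖ ^ 2 := by
  rw [EuclideanSpace.norm_eq, Real.sq_sqrt (by positivity)]
  simp [Fin.sum_univ_two, sq_abs]

lemma aux_decomp (n : Plane) (hn : n 0 ^ 2 + n 1 ^ 2 = 1) (v : Plane) :
    v = ⟪v, n⟫ • n + ⟪v, rotCW n⟫ • rotCW n := by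
  ext i; fin_cases i
  · simp only [rotCW, PiLp.inner_apply, Fin.sum_univ_two, RCLike.inner_apply, conj_trivial,
      Matrix.cons_val_zero, Matrix.cons_val_one, Matrix.head_cons, PiLp.add_apply,
      PiLp.smul_apply, smul_eq_mul, Fin.mk_zero, Fin.mk_one, Fin.isValue]
    linear_combination (-(v 0)) * hn
  · simp only [rotCW, PiLp.inner_apply, Fin.sum_univ_two, RCLike.inner_apply, conj_trivial,
      Matrix.cons_val_zero, Matrix.cons_val_one, Matrix.head_cons, PiLp.add_apply,
      PiLp.smul_apply, smul_eq_mul, Fin.mk_zero, Fin.mk_one, Fin.isValue]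
    linear_combination (-(v 1)) * hn

def exV : Plane := !₂[1, 0]
def eyV : Plane := !₂[0, 1]

lemma aux_eVec_eq (x : ℝ) : eVec x = Real.cos x • exV + Real.sin x • eyV := by
  ext i; fin_cases i <;> simp [eVec, exV, eyV]

lemma aux_eVec_deriv (x d : ℝ) :
    (-Real.sin x * d) • exV + (Real.cos x * d) • eyV = d • (-(rotCW (eVec x))) := by
  ext i; fin_cases i <;>
    simp [eVec, exV, eyV, rotCW, PiLp.add_apply, PiLp.smul_apply, smul_eq_mul] <;> ring

lemma aux_dT_eq (D : ℝ × Plane → ℝ) {s : ℝ} {p : Plane} (h : DifferentiableAt ℝ D (s, p)) :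
    dT D s p = fderiv ℝ D (s, p) (1, (0 : Plane)) := by
  have hγ : HasDerivAt (fun u : ℝ => (u, p)) ((1 : ℝ), (0 : Plane)) s :=
    (hasDerivAt_id s).prodMk (hasDerivAt_const s p)
  exact (h.hasFDerivAt.comp_hasDerivAt s hγ).deriv

lemma aux_sgrad_eq_clm (D : ℝ × Plane → ℝ) {s : ℝ} {p : Plane}
    (h : DifferentiableAt ℝ D (s, p)) :
    sgrad D s p = (InnerProductSpace.toDual ℝ Plane).symm
      ((fderiv ℝ D (s, p)).comp (ContinuousLinearMap.inr ℝ ℝ Plane)) := by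
  have hγ : HasFDerivAt (fun q : Plane => (s, q)) (ContinuousLinearMap.inr ℝ ℝ Plane) p :=
    hasFDerivAt_prodMk_right s p
  have := (h.hasFDerivAt.comp p hγ).fderiv
  rw [sgrad, gradient, ← this]
  rfl

lemma aux_inner_sgrad (D : ℝ × Plane → ℝ) {s : ℝ} {p : Plane}
    (h : DifferentiableAt ℝ D (s, p)) (v : Plane) :
    ⟪sgrad D s p, v⟫ = fderiv ℝ D (s, p) ((0 : ℝ), v) := by
  rw [aux_sgrad_eq_clm D h, InnerProductSpace.toDual_symm_apply]
  simp

lemma aux_hB (D : ℝ × Plane → ℝ) {t : ℝ} {p₀ : Plane} (h3 : ContDiffAt ℝ 3 D (t, p₀)) :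
    HasFDerivAt (fderiv ℝ D) (fderiv ℝ (fderiv ℝ D) (t, p₀)) (t, p₀) :=
  ((h3.fderiv_right (by norm_num : (2 : WithTop ℕ∞) + 1 ≤ 3)).differentiableAt
    (by norm_num)).hasFDerivAt

lemma aux_dTT_eq (D : ℝ × Plane → ℝ) {t : ℝ} {p₀ : Plane} (h3 : ContDiffAt ℝ 3 D (t, p₀)) :
    dTT D t p₀ = fderiv ℝ (fderiv ℝ D) (t, p₀) (1, (0 : Plane)) (1, (0 : Plane)) := by
  have hev : ∀ᶠ s in 𝓝 t, dT D s p₀ = fderiv ℝ D (s, p₀) (1, (0 : Plane)) := by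
    have h1 : ∀ᶠ q in 𝓝 (t, p₀), ContDiffAt ℝ 3 D q := h3.eventually (by norm_num)
    have hc : ContinuousAt (fun s : ℝ => (s, p₀)) t := by fun_prop
    filter_upwards [hc.eventually h1] with s hs
    exact aux_dT_eq D (hs.differentiableAt (by norm_num))
  have hc : HasDerivAt (fun s : ℝ => fderiv ℝ D (s, p₀))
      (fderiv ℝ (fderiv ℝ D) (t, p₀) (1, (0 : Plane))) t :=
    (aux_hB D h3).comp_hasDerivAt t ((hasDerivAt_id t).prodMk (hasDerivAt_const t p₀))
  have h2 : HasDerivAt (fun s : ℝ => fderiv ℝ D (s, p₀) (1, (0 : Plane)))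
      (fderiv ℝ (fderiv ℝ D) (t, p₀) (1, (0 : Plane)) (1, (0 : Plane))) t := by
    simpa using hc.clm_apply (hasDerivAt_const t ((1 : ℝ), (0 : Plane)))
  exact (h2.congr_of_eventuallyEq hev).deriv

lemma aux_inner_sgradDt (D : ℝ × Plane → ℝ) {t : ℝ} {p₀ : Plane}
    (h3 : ContDiffAt ℝ 3 D (t, p₀)) (v : Plane) :
    ⟪sgradDt D t p₀, v⟫ = fderiv ℝ (fderiv ℝ D) (t, p₀) ((0 : ℝ), v) (1, (0 : Plane)) := by
  have hev : (fun p => dT D t p) =ᶠ[𝓝 p₀]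
      (fun p => fderiv ℝ D (t, p) (1, (0 : Plane))) := by
    have h1 : ∀ᶠ q in 𝓝 (t, p₀), ContDiffAt ℝ 3 D q := h3.eventually (by norm_num)
    have hc : ContinuousAt (fun p : Plane => (t, p)) p₀ := by fun_prop
    filter_upwards [hc.eventually h1] with p hp
    exact aux_dT_eq D (hp.differentiableAt (by norm_num))
  have hc : HasFDerivAt (fun p : Plane => fderiv ℝ D (t, p))
      ((fderiv ℝ (fderiv ℝ D) (t, p₀)).comp (ContinuousLinearMap.inr ℝ ℝ Plane)) p₀ :=
    (aux_hB D h3).comp p₀ (hasFDerivAt_prodMk_right t p₀)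
  have h2 := hc.clm_apply (hasFDerivAt_const ((1 : ℝ), (0 : Plane)) p₀)
  rw [sgradDt, gradient, hev.fderiv_eq, h2.fderiv, InnerProductSpace.toDual_symm_apply]
  simp

lemma aux_inner_hess (D : ℝ × Plane → ℝ) {t : ℝ} {p₀ : Plane}
    (h3 : ContDiffAt ℝ 3 D (t, p₀)) (v w : Plane) :
    ⟪hess D t p₀ v, w⟫ = fderiv ℝ (fderiv ℝ D) (t, p₀) ((0 : ℝ), v) ((0 : ℝ), w) := by
  have hev : (fun p => sgrad D t p) =ᶠ[𝓝 p₀]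
      (fun p => (InnerProductSpace.toDual ℝ Plane).symm
        ((fderiv ℝ D (t, p)).comp (ContinuousLinearMap.inr ℝ ℝ Plane))) := by
    have h1 : ∀ᶠ q in 𝓝 (t, p₀), ContDiffAt ℝ 3 D q := h3.eventually (by norm_num)
    have hc : ContinuousAt (fun p : Plane => (t, p)) p₀ := by fun_prop
    filter_upwards [hc.eventually h1] with p hp
    exact aux_sgrad_eq_clm D (hp.differentiableAt (by norm_num))
  have hc : HasFDerivAt (fun p : Plane => fderiv ℝ D (t, p))
      ((fderiv ℝ (fderiv ℝ D) (t, p₀)).comp (ContinuousLinearMap.inr ℝ ℝ Plane)) p₀ :=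
    (aux_hB D h3).comp p₀ (hasFDerivAt_prodMk_right t p₀)
  set J : ((ℝ × Plane) →L[ℝ] ℝ) →L[ℝ] Plane :=
    ((InnerProductSpace.toDual ℝ Plane).symm.toContinuousLinearEquiv.toContinuousLinearMap).comp
      ((ContinuousLinearMap.compL ℝ Plane (ℝ × Plane) ℝ).flip (ContinuousLinearMap.inr ℝ ℝ Plane))
    with hJ
  have hJapp : ∀ ℓ : (ℝ × Plane) →L[ℝ] ℝ, J ℓ = (InnerProductSpace.toDual ℝ Plane).symm
      (ℓ.comp (ContinuousLinearMap.inr ℝ ℝ Plane)) := by intro ℓ; simp [hJ]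
  have h2 : HasFDerivAt (fun p : Plane => sgrad D t p)
      (J.comp ((fderiv ℝ (fderiv ℝ D) (t, p₀)).comp (ContinuousLinearMap.inr ℝ ℝ Plane))) p₀ := by
    refine HasFDerivAt.congr_of_eventuallyEq ?_ hev
    have := (J.hasFDerivAt (x := fderiv ℝ D (t, p₀))).comp p₀ hc
    refine this.congr_of_eventuallyEq (Eventually.of_forall fun p => ?_)
    simp [hJapp, Function.comp]
  rw [hess, h2.fderiv]
  simp [hJapp, InnerProductSpace.toDual_symm_apply]

end AuxLemmas

/-- the field reading `d(t) = D(t, r(t))` of a robot moving at constant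
speed `v̄` is twice differentiable with
`d̈ = ρ·[(θ̇ − 2ω − κ·v_T + 2·v_Δ·τ_ρ)·v_T + 2·v_ρ·v_Δ − α + v_Δ²·n_ρ]`,
where `v_Δ = v̄·⟨N, e(θ)⟩ − λ` and `v_T = v̄·⟨e(θ), T⟩`. -/
theorem field_reading_second_derivative
    (D : ℝ × Plane → ℝ) (vbar : ℝ) (hv : 0 < vbar)
    (r : ℝ → Plane) (θ : ℝ → ℝ) (hθ : Differentiable ℝ θ)
    (hr : ∀ s, HasDerivAt r (vbar • eVec (θ s)) s)
    (hD : ∀ s, ContDiffAt ℝ 3 D (s, r s))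
    (hgrad : ∀ s, sgrad D s (r s) ≠ 0)
    (t : ℝ) (vΔ vT : ℝ)
    (hvΔ : vΔ = vbar * ⟪unitN D t (r t), eVec (θ t)⟫ - lam D t (r t))
    (hvT : vT = vbar * ⟪eVec (θ t), unitT D t (r t)⟫) :
    HasDerivAt (fun s => deriv (fun u => D (u, r u)) s)
      (rho D t (r t) *
        ((deriv θ t - 2 * omg D t (r t) - kap D t (r t) * vT
            + 2 * vΔ * tauRho D t (r t)) * vT
          + 2 * vRho D t (r t) * vΔ - alph D t (r t)
          + vΔ ^ 2 * nRho D t (r t))) t := by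
  have h3 := hD t
  have hdiff : DifferentiableAt ℝ D (t, r t) := h3.differentiableAt (by norm_num)
  have hρ : ‖sgrad D t (r t)‖ ≠ 0 := norm_ne_zero_iff.mpr (hgrad t)
  have hd1 : (fun s => deriv (fun u => D (u, r u)) s)
      = fun s => fderiv ℝ D (s, r s) (1, vbar • eVec (θ s)) := by
    funext s
    have hγ : HasDerivAt (fun u : ℝ => (u, r u)) ((1 : ℝ), vbar • eVec (θ s)) s :=
      (hasDerivAt_id s).prodMk (hr s)
    exact (((hD s).differentiableAt (by norm_num)).hasFDerivAt.comp_hasDerivAt s hγ).deriv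
  rw [hd1]
  have hc : HasDerivAt (fun s => fderiv ℝ D (s, r s))
      (fderiv ℝ (fderiv ℝ D) (t, r t) (1, vbar • eVec (θ t))) t :=
    (aux_hB D h3).comp_hasDerivAt t ((hasDerivAt_id t).prodMk (hr t))
  have hcos : HasDerivAt (fun s => Real.cos (θ s)) (-Real.sin (θ t) * deriv θ t) t :=
    (Real.hasDerivAt_cos (θ t)).comp t (hθ t).hasDerivAt
  have hsin : HasDerivAt (fun s => Real.sin (θ s)) (Real.cos (θ t) * deriv θ t) t :=
    (Real.hasDerivAt_sin (θ t)).comp t (hθ t).hasDerivAt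
  have hex : HasDerivAt (fun s => eVec (θ s)) ((deriv θ t) • (-(rotCW (eVec (θ t))))) t := by
    have h1 := (hcos.smul_const exV).add (hsin.smul_const eyV)
    have h2 : (fun s => Real.cos (θ s) • exV + Real.sin (θ s) • eyV) = fun s => eVec (θ s) :=
      funext fun s => (aux_eVec_eq (θ s)).symm
    change HasDerivAt (fun s => Real.cos (θ s) • exV + Real.sin (θ s) • eyV) _ t at h1
    rw [h2, aux_eVec_deriv] at h1
    exact h1
  have hu : HasDerivAt (fun s => ((1 : ℝ), vbar • eVec (θ s)))
      ((0 : ℝ), vbar • ((deriv θ t) • (-(rotCW (eVec (θ t)))))) t :=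
    (hasDerivAt_const t (1 : ℝ)).prodMk (hex.const_smul vbar)
  have hW := hc.clm_apply hu
  refine hW.congr_deriv (Eq.symm ?_)
  -- Notation
  set N := unitN D t (r t) with hN
  set T := unitT D t (r t) with hT
  have hTN : T = rotCW N := rfl
  have hNunit : N 0 ^ 2 + N 1 ^ 2 = 1 := by
    have h2 := aux_norm_sq (sgrad D t (r t))
    rw [hN]
    simp only [unitN, PiLp.smul_apply, smul_eq_mul]
    field_simp
    linarith
  have hdecompN := aux_decomp N hNunit (vbar • eVec (θ t))
  rw [← hTN] at hdecompN
  set a := ⟪vbar • eVec (θ t), N⟫ with haDef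
  set b := ⟪vbar • eVec (θ t), T⟫ with hbDef
  have hsplit : ((1 : ℝ), vbar • eVec (θ t))
      = ((1 : ℝ), (0 : Plane)) + a • ((0 : ℝ), N) + b • ((0 : ℝ), T) := by
    have h6 : ((1 : ℝ), (0 : Plane)) + a • ((0 : ℝ), N) + b • ((0 : ℝ), T)
        = ((1 : ℝ), a • N + b • T) := by
      simp [Prod.smul_mk, Prod.mk_add_mk]
    rw [h6, ← hdecompN]
  have hsymm := h3.isSymmSndFDerivAt (by norm_num)
  set B := fderiv ℝ (fderiv ℝ D) (t, r t) with hBdef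
  have hsymm' : ∀ v w : ℝ × Plane, B v w = B w v := fun v w => hsymm v w
  have eH : ∀ v w : Plane, ⟪hess D t (r t) v, w⟫ = B ((0 : ℝ), v) ((0 : ℝ), w) :=
    fun v w => aux_inner_hess D h3 v w
  have eG : ∀ v : Plane, ⟪sgradDt D t (r t), v⟫ = B ((0 : ℝ), v) (1, (0 : Plane)) :=
    fun v => aux_inner_sgradDt D h3 v
  have eTT : dTT D t (r t) = B (1, (0 : Plane)) (1, (0 : Plane)) := aux_dTT_eq D h3
  have eL := aux_dT_eq D hdiff
  have hBsplit : B (1, vbar • eVec (θ t)) (1, vbar • eVec (θ t))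
      = B (1, (0 : Plane)) (1, (0 : Plane))
        + 2 * a * B ((0 : ℝ), N) (1, (0 : Plane)) + 2 * b * B ((0 : ℝ), T) (1, (0 : Plane))
        + a ^ 2 * B ((0 : ℝ), N) ((0 : ℝ), N) + 2 * (a * b) * B ((0 : ℝ), N) ((0 : ℝ), T)
        + b ^ 2 * B ((0 : ℝ), T) ((0 : ℝ), T) := by
    rw [hsplit]
    simp only [map_add, map_smul, ContinuousLinearMap.add_apply, ContinuousLinearMap.smul_apply,
      smul_eq_mul]
    rw [hsymm' (1, (0 : Plane)) ((0 : ℝ), N), hsymm' (1, (0 : Plane)) ((0 : ℝ), T),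
      hsymm' ((0 : ℝ), T) ((0 : ℝ), N)]
    ring
  have hrotg : rotCW (sgrad D t (r t)) = ‖sgrad D t (r t)‖ • T := by
    have h4 : T = rotCW (‖sgrad D t (r t)‖⁻¹ • sgrad D t (r t)) := rfl
    rw [h4, aux_rotCW_smul, smul_smul, mul_inv_cancel₀ hρ, one_smul]
  have hbT : b = vbar * ⟪eVec (θ t), T⟫ := by rw [hbDef, real_inner_smul_left]
  have hLterm : (fderiv ℝ D (t, r t)) ((0 : ℝ), vbar • deriv θ t • -rotCW (eVec (θ t)))
      = deriv θ t * (‖sgrad D t (r t)‖ * b) := by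
    rw [← aux_inner_sgrad D hdiff]
    rw [real_inner_smul_right, real_inner_smul_right, inner_neg_right]
    have h5 : ⟪sgrad D t (r t), rotCW (eVec (θ t))⟫
        = -⟪rotCW (sgrad D t (r t)), eVec (θ t)⟫ := by
      rw [aux_inner_rotCW, neg_neg]
    rw [h5, hrotg, real_inner_smul_left, real_inner_comm, hbT]
    ring
  have ha : a = vΔ + lam D t (r t) := by
    rw [haDef, real_inner_smul_left, real_inner_comm, hvΔ]; ring
  have hvΔ' : vΔ = a - lam D t (r t) := by rw [ha]; ring
  have hb2 : vT = b := by rw [hbT, hvT]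
  rw [hBsplit, hLterm, hvΔ', hb2]
  simp only [rho, omg, kap, tauRho, vRho, alph, nRho, lam, inner_add_left, real_inner_smul_left,
    ← hN, ← hT, eG, eH, eTT, eL]
  field_simp
  ring
end
end
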